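/- Every k-preserving closed ordered space (i.e., a closed preordered space with ≤ antisymmetric) whose topology is locally compact and σ-compact is convex and normally ordered. -/
import Mathlib


open Topology

set_option linter.unusedSectionVars false
set_option maxHeartbeats 1000000

/-- The increasing hull `i(S) = {y | ∃ x ∈ S, x ≤ y}`. -/
def incHull {E : Type*} [Preorder E] (S : Set E) : Set E := {y | ∃ x ∈ S, x ≤ y}

/-- The decreasing hull `d(S) = {y | ∃ x ∈ S, y ≤ x}`. -/
def decHull {E : Type*} [Preorder E] (S : Set E) : Set E := {y | ∃ x ∈ S, y ≤ x}

lemma auxKP.depRec {α : Type*} (Q : ℕ → α → Prop) (R : ℕ → α → α → Prop)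
    (a0 : α) (h0 : Q 0 a0)
    (hstep : ∀ n a, Q n a → ∃ b, Q (n + 1) b ∧ R n a b) :
    ∃ f : ℕ → α, f 0 = a0 ∧ (∀ n, Q n (f n)) ∧ ∀ n, R n (f n) (f (n + 1)) := by
  classical
  let g : ∀ n : ℕ, {a : α // Q n a} := fun n => Nat.rec ⟨a0, h0⟩
    (fun n p => ⟨Classical.choose (hstep n p.1 p.2),
      (Classical.choose_spec (hstep n p.1 p.2)).1⟩) n
  exact ⟨fun n => (g n).1, rfl, fun n => (g n).2,
    fun n => (Classical.choose_spec (hstep n (g n).1 (g n).2)).2⟩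

section Aux
variable {E : Type*} [TopologicalSpace E] [Preorder E]

lemma auxKP.isClosed_incHull (hG : IsClosed {p : E × E | p.1 ≤ p.2}) {K : Set E}
    (hK : IsCompact K) : IsClosed (incHull K) := by
  rw [← isOpen_compl_iff, isOpen_iff_forall_mem_open]
  intro y hy
  have hsub : K ×ˢ ({y} : Set E) ⊆ {p : E × E | p.1 ≤ p.2}ᶜ := by
    rintro ⟨k, y'⟩ ⟨hk, hy'⟩ hle
    exact hy ⟨k, hk, (Set.mem_singleton_iff.mp hy') ▸ hle⟩
  obtain ⟨u, v, _, hv, hKu, hyv, huv⟩ :=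
    generalized_tube_lemma hK isCompact_singleton hG.isOpen_compl hsub
  refine ⟨v, fun z hz hmem => ?_, hv, hyv rfl⟩
  obtain ⟨k, hk, hkz⟩ := hmem
  exact huv (Set.mk_mem_prod (hKu hk) hz) hkz

lemma auxKP.isClosed_decHull (hG : IsClosed {p : E × E | p.1 ≤ p.2}) {K : Set E}
    (hK : IsCompact K) : IsClosed (decHull K) := by
  rw [← isOpen_compl_iff, isOpen_iff_forall_mem_open]
  intro y hy
  have hsub : ({y} : Set E) ×ˢ K ⊆ {p : E × E | p.1 ≤ p.2}ᶜ := by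
    rintro ⟨y', k⟩ ⟨hy', hk⟩ hle
    exact hy ⟨k, hk, (Set.mem_singleton_iff.mp hy') ▸ hle⟩
  obtain ⟨v, u, hv, _, hyv, hKu, huv⟩ :=
    generalized_tube_lemma isCompact_singleton hK hG.isOpen_compl hsub
  refine ⟨v, fun z hz hmem => ?_, hv, hyv rfl⟩
  obtain ⟨k, hk, hkz⟩ := hmem
  exact huv (Set.mk_mem_prod hz (hKu hk)) hkz

/-- Relative Nachbin separation inside a compact set `K`. -/
lemma auxKP.lemN (hG : IsClosed {p : E × E | p.1 ≤ p.2}) {K A B : Set E}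
    (hK : IsCompact K) (hA : IsCompact A) (hB : IsCompact B)
    (hAK : A ⊆ K) (hBK : B ⊆ K)
    (hAd : ∀ z ∈ K, ∀ a ∈ A, z ≤ a → z ∈ A)
    (hBi : ∀ z ∈ K, ∀ b ∈ B, b ≤ z → z ∈ B)
    (hAB : A ∩ B = ∅) :
    ∃ WU WV : Set E, IsOpen WU ∧ IsOpen WV ∧ A ⊆ WU ∩ K ∧ B ⊆ WV ∩ K ∧
      (∀ z ∈ K, ∀ u ∈ WU ∩ K, z ≤ u → z ∈ WU ∩ K) ∧
      (∀ z ∈ K, ∀ v ∈ WV ∩ K, v ≤ z → z ∈ WV ∩ K) ∧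
      (WU ∩ K) ∩ (WV ∩ K) = ∅ := by
  have hsub : B ×ˢ A ⊆ {p : E × E | p.1 ≤ p.2}ᶜ := by
    rintro ⟨b, a⟩ ⟨hb, ha⟩ hle
    have : b ∈ A := hAd b (hBK hb) a ha hle
    exact Set.eq_empty_iff_forall_notMem.mp hAB b ⟨this, hb⟩
  obtain ⟨P, Q, hP, hQ, hBP, hAQ, hPQ⟩ :=
    generalized_tube_lemma hB hA hG.isOpen_compl hsub
  -- U side
  set F : Set E := K \ Q with hF
  have hFc : IsCompact F := hK.diff hQ
  have hiF : IsClosed (incHull F) := auxKP.isClosed_incHull hG hFc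
  set WU : Set E := (incHull F)ᶜ with hWU
  -- V side
  set F' : Set E := K \ P with hF'
  have hF'c : IsCompact F' := hK.diff hP
  have hdF' : IsClosed (decHull F') := auxKP.isClosed_decHull hG hF'c
  set WV : Set E := (decHull F')ᶜ with hWV
  have hUQ : WU ∩ K ⊆ Q := by
    rintro u ⟨hu, huK⟩
    by_contra huQ
    exact hu ⟨u, ⟨huK, huQ⟩, le_refl u⟩
  have hVP : WV ∩ K ⊆ P := by
    rintro v ⟨hv, hvK⟩
    by_contra hvP
    exact hv ⟨v, ⟨hvK, hvP⟩, le_refl v⟩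
  refine ⟨WU, WV, hiF.isOpen_compl, hdF'.isOpen_compl, ?_, ?_, ?_, ?_, ?_⟩
  · intro a ha
    refine ⟨fun hmem => ?_, hAK ha⟩
    obtain ⟨c, ⟨hcK, hcQ⟩, hca⟩ := hmem
    exact hcQ (hAQ (hAd c hcK a ha hca))
  · intro b hb
    refine ⟨fun hmem => ?_, hBK hb⟩
    obtain ⟨c, ⟨hcK, hcP⟩, hbc⟩ := hmem
    exact hcP (hBP (hBi c hcK b hb hbc))
  · rintro z hzK u ⟨hu, huK⟩ hzu
    refine ⟨fun hmem => ?_, hzK⟩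
    obtain ⟨c, hc, hcz⟩ := hmem
    exact hu ⟨c, hc, le_trans hcz hzu⟩
  · rintro z hzK v ⟨hv, hvK⟩ hvz
    refine ⟨fun hmem => ?_, hzK⟩
    obtain ⟨c, hc, hzc⟩ := hmem
    exact hv ⟨c, hc, le_trans hvz hzc⟩
  · apply Set.eq_empty_iff_forall_notMem.mpr
    rintro z ⟨hzU, hzV⟩
    exact hPQ (Set.mk_mem_prod (hVP hzV) (hUQ hzU)) (le_refl z)

lemma auxKP.lemM (hG : IsClosed {p : E × E | p.1 ≤ p.2}) {K A B O : Set E}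
    (hK : IsCompact K) (hA : IsCompact A) (hB : IsCompact B)
    (hAK : A ⊆ K) (hBK : B ⊆ K)
    (hAd : ∀ z ∈ K, ∀ a ∈ A, z ≤ a → z ∈ A)
    (hBi : ∀ z ∈ K, ∀ b ∈ B, b ≤ z → z ∈ B)
    (hO : IsOpen O) (hABO : A ∩ B ⊆ O) :
    ∃ WU WV FC FD : Set E, IsOpen WU ∧ IsOpen WV ∧ IsClosed FC ∧ IsClosed FD ∧
      A ⊆ WU ∩ K ∧ B ⊆ WV ∩ K ∧ WU ∩ K ⊆ K ∩ FC ∧ WV ∩ K ⊆ K ∩ FD ∧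
      (∀ z ∈ K, ∀ u ∈ WU ∩ K, z ≤ u → z ∈ WU ∩ K) ∧
      (∀ z ∈ K, ∀ v ∈ WV ∩ K, v ≤ z → z ∈ WV ∩ K) ∧
      (∀ z ∈ K, ∀ u ∈ K ∩ FC, z ≤ u → z ∈ K ∩ FC) ∧
      (∀ z ∈ K, ∀ v ∈ K ∩ FD, v ≤ z → z ∈ K ∩ FD) ∧
      (K ∩ FC) ∩ (K ∩ FD) ⊆ O := by
  classical
  set L : Set E := K \ O with hLdef
  have hL : IsCompact L := hK.diff hO
  have claim : ∀ z : E, z ∈ L → ∃ W WS WT F1 F2 : Set E,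
      IsOpen W ∧ z ∈ W ∧ IsOpen WS ∧ IsOpen WT ∧ IsClosed F1 ∧ IsClosed F2 ∧
      A ⊆ WS ∩ K ∧ B ⊆ WT ∩ K ∧ WS ∩ K ⊆ K ∩ F1 ∧ WT ∩ K ⊆ K ∩ F2 ∧
      (∀ z' ∈ K, ∀ u ∈ WS ∩ K, z' ≤ u → z' ∈ WS ∩ K) ∧
      (∀ z' ∈ K, ∀ v ∈ WT ∩ K, v ≤ z' → z' ∈ WT ∩ K) ∧
      (∀ z' ∈ K, ∀ u ∈ K ∩ F1, z' ≤ u → z' ∈ K ∩ F1) ∧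
      (∀ z' ∈ K, ∀ v ∈ K ∩ F2, v ≤ z' → z' ∈ K ∩ F2) ∧
      W ∩ ((K ∩ F1) ∩ (K ∩ F2)) = ∅ := by
    intro z hzL
    have hzK : z ∈ K := hzL.1
    have hznAB : ¬ (z ∈ A ∧ z ∈ B) := fun h => hzL.2 (hABO ⟨h.1, h.2⟩)
    by_cases hzA : z ∈ A
    · -- then z ∉ B : separate decHull{z}∩K from B
      have hzB : z ∉ B := fun h => hznAB ⟨hzA, h⟩
      have hdz : IsCompact (decHull ({z} : Set E) ∩ K) :=
        hK.inter_left (auxKP.isClosed_decHull hG isCompact_singleton)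
      obtain ⟨WU', WV', hWU', hWV', hAsub, hBsub, hdec, hinc, hdisj⟩ :=
        auxKP.lemN hG hK hdz hB Set.inter_subset_right hBK
          (by
            rintro w hwK a ⟨⟨c, hc, hac⟩, haK⟩ hwa
            exact ⟨⟨c, hc, le_trans hwa hac⟩, hwK⟩)
          hBi
          (by
            apply Set.eq_empty_iff_forall_notMem.mpr
            rintro w ⟨⟨⟨c, hc, hwc⟩, hwK⟩, hwB⟩
            rw [Set.mem_singleton_iff] at hc
            exact hzB (hBi z hzK w hwB (hc ▸ hwc)))
      have hzWU' : z ∈ WU' := (hAsub ⟨⟨z, rfl, le_refl z⟩, hzK⟩).1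
      refine ⟨WU', Set.univ, WV', Set.univ, WU'ᶜ, hWU', hzWU', isOpen_univ, hWV',
        isClosed_univ, isClosed_compl_iff.mpr hWU',
        fun a ha => ⟨Set.mem_univ a, hAK ha⟩, hBsub,
        fun u hu => ⟨hu.2, Set.mem_univ u⟩, ?_,
        fun z' hz'K u hu hle => ⟨Set.mem_univ z', hz'K⟩, hinc,
        fun z' hz'K u hu hle => ⟨hz'K, Set.mem_univ z'⟩, ?_, ?_⟩
      · rintro v ⟨hv, hvK⟩
        refine ⟨hvK, fun hvU => ?_⟩
        exact Set.eq_empty_iff_forall_notMem.mp hdisj v ⟨⟨hvU, hvK⟩, ⟨hv, hvK⟩⟩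
      · rintro z' hz'K v ⟨hvK, hv⟩ hle
        refine ⟨hz'K, fun hz'U => ?_⟩
        exact hv (hdec v hvK z' ⟨hz'U, hz'K⟩ hle).1
      · apply Set.eq_empty_iff_forall_notMem.mpr
        rintro w ⟨hwW, -, -, hwF2⟩
        exact hwF2 hwW
    · -- separate A from incHull{z}∩K
      have hiz : IsCompact (incHull ({z} : Set E) ∩ K) :=
        hK.inter_left (auxKP.isClosed_incHull hG isCompact_singleton)
      obtain ⟨WU', WV', hWU', hWV', hAsub, hBsub, hdec, hinc, hdisj⟩ :=
        auxKP.lemN hG hK hA hiz hAK Set.inter_subset_right hAd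
          (by
            rintro w hwK b ⟨⟨c, hc, hcb⟩, hbK⟩ hbw
            exact ⟨⟨c, hc, le_trans hcb hbw⟩, hwK⟩)
          (by
            apply Set.eq_empty_iff_forall_notMem.mpr
            rintro w ⟨hwA, ⟨⟨c, hc, hcw⟩, hwK⟩⟩
            rw [Set.mem_singleton_iff] at hc
            exact hzA (hAd z hzK w hwA (hc ▸ hcw)))
      have hzWV' : z ∈ WV' := (hBsub ⟨⟨z, rfl, le_refl z⟩, hzK⟩).1
      refine ⟨WV', WU', Set.univ, WV'ᶜ, Set.univ, hWV', hzWV', hWU', isOpen_univ,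
        isClosed_compl_iff.mpr hWV', isClosed_univ,
        hAsub, fun b hb => ⟨Set.mem_univ b, hBK hb⟩,
        ?_, fun v hv => ⟨hv.2, Set.mem_univ v⟩,
        hdec, fun z' hz'K v hv hle => ⟨Set.mem_univ z', hz'K⟩,
        ?_, fun z' hz'K v hv hle => ⟨hz'K, Set.mem_univ z'⟩, ?_⟩
      · rintro u ⟨hu, huK⟩
        refine ⟨huK, fun huV => ?_⟩
        exact Set.eq_empty_iff_forall_notMem.mp hdisj u ⟨⟨hu, huK⟩, ⟨huV, huK⟩⟩
      · rintro z' hz'K u ⟨huK, hu⟩ hle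
        refine ⟨hz'K, fun hz'V => ?_⟩
        exact hu (hinc u huK z' ⟨hz'V, hz'K⟩ hle).1
      · apply Set.eq_empty_iff_forall_notMem.mpr
        rintro w ⟨hwW, ⟨-, hwF1⟩, -⟩
        exact hwF1 hwW
  choose W WS WT F1 F2 hWo hzW hWSo hWTo hF1c hF2c hAsub hBsub hSC hTD hdS hiT hdC hiD hdisj
    using claim
  obtain ⟨t, ht⟩ := hL.elim_finite_subcover (fun i : ↥L => W i.1 i.2)
    (fun i => hWo i.1 i.2)
    (fun z hz => Set.mem_iUnion.mpr ⟨⟨z, hz⟩, hzW z hz⟩)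
  refine ⟨⋂ i ∈ t, WS i.1 i.2, ⋂ i ∈ t, WT i.1 i.2, ⋂ i ∈ t, F1 i.1 i.2, ⋂ i ∈ t, F2 i.1 i.2,
    isOpen_biInter_finset (fun i _ => hWSo i.1 i.2),
    isOpen_biInter_finset (fun i _ => hWTo i.1 i.2),
    isClosed_biInter (fun i _ => hF1c i.1 i.2),
    isClosed_biInter (fun i _ => hF2c i.1 i.2), ?_, ?_, ?_, ?_, ?_, ?_, ?_, ?_, ?_⟩
  · exact fun a ha => ⟨Set.mem_iInter₂.mpr fun i _ => (hAsub i.1 i.2 ha).1, hAK ha⟩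
  · exact fun b hb => ⟨Set.mem_iInter₂.mpr fun i _ => (hBsub i.1 i.2 hb).1, hBK hb⟩
  · rintro u ⟨hu, huK⟩
    refine ⟨huK, Set.mem_iInter₂.mpr fun i hi => ?_⟩
    exact (hSC i.1 i.2 ⟨Set.mem_iInter₂.mp hu i hi, huK⟩).2
  · rintro v ⟨hv, hvK⟩
    refine ⟨hvK, Set.mem_iInter₂.mpr fun i hi => ?_⟩
    exact (hTD i.1 i.2 ⟨Set.mem_iInter₂.mp hv i hi, hvK⟩).2
  · rintro z' hz'K u ⟨hu, huK⟩ hle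
    refine ⟨Set.mem_iInter₂.mpr fun i hi => ?_, hz'K⟩
    exact (hdS i.1 i.2 z' hz'K u ⟨Set.mem_iInter₂.mp hu i hi, huK⟩ hle).1
  · rintro z' hz'K v ⟨hv, hvK⟩ hle
    refine ⟨Set.mem_iInter₂.mpr fun i hi => ?_, hz'K⟩
    exact (hiT i.1 i.2 z' hz'K v ⟨Set.mem_iInter₂.mp hv i hi, hvK⟩ hle).1
  · rintro z' hz'K u ⟨huK, hu⟩ hle
    refine ⟨hz'K, Set.mem_iInter₂.mpr fun i hi => ?_⟩
    exact (hdC i.1 i.2 z' hz'K u ⟨huK, Set.mem_iInter₂.mp hu i hi⟩ hle).2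
  · rintro z' hz'K v ⟨hvK, hv⟩ hle
    refine ⟨hz'K, Set.mem_iInter₂.mpr fun i hi => ?_⟩
    exact (hiD i.1 i.2 z' hz'K v ⟨hvK, Set.mem_iInter₂.mp hv i hi⟩ hle).2
  · rintro w ⟨⟨hwK, hwFC⟩, ⟨-, hwFD⟩⟩
    by_contra hwO
    have hwL : w ∈ L := ⟨hwK, hwO⟩
    obtain ⟨i, hit, hwWi⟩ := Set.mem_iUnion₂.mp (ht hwL)
    refine Set.eq_empty_iff_forall_notMem.mp (hdisj i.1 i.2) w
      ⟨hwWi, ⟨hwK, Set.mem_iInter₂.mp hwFC i hit⟩, ⟨hwK, Set.mem_iInter₂.mp hwFD i hit⟩⟩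

/-- The inductive step along the compact exhaustion. -/
lemma auxKP.step (hG : IsClosed {p : E × E | p.1 ≤ p.2}) {K A B C D O : Set E}
    (hK : IsCompact K) (hKconv : decHull K ∩ incHull K ⊆ K)
    (hAc : IsClosed A) (hAd : ∀ z a : E, a ∈ A → z ≤ a → z ∈ A)
    (hBc : IsClosed B) (hBi : ∀ z b : E, b ∈ B → b ≤ z → z ∈ B)
    (hC : IsCompact C) (hCK : C ⊆ K) (hD : IsCompact D) (hDK : D ⊆ K)
    (hO : IsOpen O)
    (hI : decHull (A ∪ C) ∩ incHull (B ∪ D) ⊆ O)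
    (hsp : O = ∅ ∨ (A ⊆ decHull K ∧ B ⊆ incHull K)) :
    ∃ WU WV C' D' : Set E, IsOpen WU ∧ IsOpen WV ∧ IsCompact C' ∧ IsCompact D' ∧
      C' ⊆ K ∧ D' ⊆ K ∧
      (A ∩ K) ∪ C ⊆ WU ∩ K ∧ (B ∩ K) ∪ D ⊆ WV ∩ K ∧
      WU ∩ K ⊆ C' ∧ WV ∩ K ⊆ D' ∧
      (∀ z ∈ K, ∀ u ∈ WU ∩ K, z ≤ u → z ∈ WU ∩ K) ∧
      (∀ z ∈ K, ∀ v ∈ WV ∩ K, v ≤ z → z ∈ WV ∩ K) ∧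
      (∀ z ∈ K, ∀ u ∈ C', z ≤ u → z ∈ C') ∧
      (∀ z ∈ K, ∀ v ∈ D', v ≤ z → z ∈ D') ∧
      C' ∩ D' ⊆ O ∧
      decHull (A ∪ C') ∩ incHull (B ∪ D') ⊆ O := by
  have hA0 : IsCompact ((A ∩ K) ∪ C) := (hK.inter_left hAc).union hC
  have hB0 : IsCompact ((B ∩ K) ∪ D) := (hK.inter_left hBc).union hD
  set Astar : Set E := decHull ((A ∩ K) ∪ C) ∩ K with hAstar
  set Bstar : Set E := incHull ((B ∩ K) ∪ D) ∩ K with hBstar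
  have hAstarc : IsCompact Astar := hK.inter_left (auxKP.isClosed_decHull hG hA0)
  have hBstarc : IsCompact Bstar := hK.inter_left (auxKP.isClosed_incHull hG hB0)
  have hAsd : ∀ z ∈ K, ∀ a ∈ Astar, z ≤ a → z ∈ Astar := by
    rintro z hzK a ⟨⟨c, hc, hac⟩, haK⟩ hza
    exact ⟨⟨c, hc, le_trans hza hac⟩, hzK⟩
  have hBsi : ∀ z ∈ K, ∀ b ∈ Bstar, b ≤ z → z ∈ Bstar := by
    rintro z hzK b ⟨⟨c, hc, hcb⟩, hbK⟩ hbz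
    exact ⟨⟨c, hc, le_trans hcb hbz⟩, hzK⟩
  have hstO : Astar ∩ Bstar ⊆ O := by
    rintro z ⟨⟨⟨a, ha, hza⟩, -⟩, ⟨⟨b, hb, hbz⟩, -⟩⟩
    refine hI ⟨⟨a, ?_, hza⟩, ⟨b, ?_, hbz⟩⟩
    · rcases ha with h | h
      · exact Or.inl h.1
      · exact Or.inr h
    · rcases hb with h | h
      · exact Or.inl h.1
      · exact Or.inr h
  obtain ⟨WU, WV, FC, FD, hWUo, hWVo, hFCc, hFDc, hAsub, hBsub, hSC, hTD, hdS, hiT, hdC,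
    hiD, hCD⟩ := auxKP.lemM hG hK hAstarc hBstarc Set.inter_subset_right
      Set.inter_subset_right hAsd hBsi hO hstO
  have hA0star : (A ∩ K) ∪ C ⊆ Astar := by
    rintro a (⟨haA, haK⟩ | haC)
    · exact ⟨⟨a, Or.inl ⟨haA, haK⟩, le_refl a⟩, haK⟩
    · exact ⟨⟨a, Or.inr haC, le_refl a⟩, hCK haC⟩
  have hB0star : (B ∩ K) ∪ D ⊆ Bstar := by
    rintro b (⟨hbB, hbK⟩ | hbD)
    · exact ⟨⟨b, Or.inl ⟨hbB, hbK⟩, le_refl b⟩, hbK⟩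
    · exact ⟨⟨b, Or.inr hbD, le_refl b⟩, hDK hbD⟩
  have hAC' : A ∩ K ⊆ K ∩ FC :=
    fun a ha => hSC (hAsub (hA0star (Or.inl ha)))
  have hBD' : B ∩ K ⊆ K ∩ FD :=
    fun b hb => hTD (hBsub (hB0star (Or.inl hb)))
  refine ⟨WU, WV, K ∩ FC, K ∩ FD, hWUo, hWVo, hK.inter_right hFCc, hK.inter_right hFDc,
    Set.inter_subset_left, Set.inter_subset_left,
    fun a ha => hAsub (hA0star ha), fun b hb => hBsub (hB0star hb),
    hSC, hTD, hdS, hiT, hdC, hiD, hCD, ?_⟩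
  rintro z ⟨⟨a, ha, hza⟩, ⟨b, hb, hbz⟩⟩
  rcases ha with haA | haC' <;> rcases hb with hbB | hbD'
  · exact hI ⟨⟨a, Or.inl haA, hza⟩, ⟨b, Or.inl hbB, hbz⟩⟩
  · -- a ∈ A, b ∈ K ∩ FD
    have hzA : z ∈ A := hAd z a haA hza
    rcases hsp with rfl | ⟨hspA, hspB⟩
    · exfalso
      have hbA : b ∈ A := hAd b z hzA hbz
      have : b ∈ (K ∩ FC) ∩ (K ∩ FD) := ⟨hAC' ⟨hbA, hbD'.1⟩, hbD'⟩
      exact (hCD this)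
    · have hzK : z ∈ K := hKconv ⟨hspA hzA, ⟨b, hbD'.1, hbz⟩⟩
      exact hCD ⟨hAC' ⟨hzA, hzK⟩, hiD z hzK b hbD' hbz⟩
  · -- a ∈ K ∩ FC, b ∈ B
    have hzB : z ∈ B := hBi z b hbB hbz
    rcases hsp with rfl | ⟨hspA, hspB⟩
    · exfalso
      have haB : a ∈ B := hBi a z hzB hza
      have : a ∈ (K ∩ FC) ∩ (K ∩ FD) := ⟨haC', hBD' ⟨haB, haC'.1⟩⟩
      exact (hCD this)
    · have hzK : z ∈ K := hKconv ⟨⟨a, haC'.1, hza⟩, hspB hzB⟩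
      exact hCD ⟨hdC z hzK a haC' hza, hBD' ⟨hzB, hzK⟩⟩
  · -- a ∈ K ∩ FC, b ∈ K ∩ FD
    have hzK : z ∈ K := hKconv ⟨⟨a, haC'.1, hza⟩, ⟨b, hbD'.1, hbz⟩⟩
    exact hCD ⟨hdC z hzK a haC' hza, hiD z hzK b hbD' hbz⟩

lemma auxKP.nbhd (hloc : ∀ x : E, ∃ K : Set E, IsCompact K ∧ K ∈ 𝓝 x)
    {S : Set E} (hS : IsCompact S) : ∃ T : Set E, IsCompact T ∧ S ⊆ interior T := by
  classical
  choose N hNc hNn using hloc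
  obtain ⟨t, ht⟩ := hS.elim_finite_subcover (fun i : ↥S => interior (N i.1))
    (fun i => isOpen_interior)
    (fun z hz => Set.mem_iUnion.mpr ⟨⟨z, hz⟩, mem_interior_iff_mem_nhds.mpr (hNn z)⟩)
  refine ⟨⋃ i ∈ t, N i.1, t.finite_toSet.isCompact_biUnion (fun i _ => hNc i.1), ?_⟩
  intro z hz
  obtain ⟨i, hit, hzi⟩ := Set.mem_iUnion₂.mp (ht hz)
  exact interior_mono (Set.subset_biUnion_of_mem hit) hzi

lemma auxKP.exhaust
    (hkp : ∀ K : Set E, IsCompact K → IsCompact (decHull K ∩ incHull K))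
    (hloc : ∀ x : E, ∃ K : Set E, IsCompact K ∧ K ∈ 𝓝 x)
    (hsigma : ∃ K : ℕ → Set E, (∀ n, IsCompact (K n)) ∧ (⋃ n, K n) = Set.univ)
    {S : Set E} (hS : IsCompact S) :
    ∃ K : ℕ → Set E, (∀ n, IsCompact (K n)) ∧
      (∀ n, decHull (K n) ∩ incHull (K n) ⊆ K n) ∧
      (∀ n, K n ⊆ interior (K (n + 1))) ∧ (⋃ n, K n) = Set.univ ∧ S ⊆ K 0 := by
  obtain ⟨K', hK'c, hK'u⟩ := hsigma
  have hsub : ∀ T : Set E, T ⊆ decHull T ∩ incHull T :=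
    fun T z hz => ⟨⟨z, hz, le_refl z⟩, ⟨z, hz, le_refl z⟩⟩
  have hconv : ∀ T : Set E,
      decHull (decHull T ∩ incHull T) ∩ incHull (decHull T ∩ incHull T) ⊆
        decHull T ∩ incHull T := by
    rintro T z ⟨⟨a, ⟨⟨ta, hta, hata⟩, -⟩, hza⟩, ⟨b, ⟨-, ⟨tb, htb, htbb⟩⟩, hbz⟩⟩
    exact ⟨⟨ta, hta, le_trans hza hata⟩, ⟨tb, htb, le_trans htbb hbz⟩⟩
  obtain ⟨f, hf0, hfQ, hfR⟩ := auxKP.depRec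
    (fun _ A => IsCompact A ∧ decHull A ∩ incHull A ⊆ A)
    (fun n A B => A ⊆ interior B ∧ K' n ⊆ B)
    (decHull S ∩ incHull S) ⟨hkp S hS, hconv S⟩
    (by
      intro n A hQ
      obtain ⟨T, hTc, hTi⟩ := auxKP.nbhd hloc (hQ.1.union (hK'c n))
      refine ⟨decHull T ∩ incHull T, ⟨hkp T hTc, hconv T⟩, ?_, ?_⟩
      · exact fun z hz => interior_mono (hsub T) (hTi (Or.inl hz))
      · exact fun z hz => hsub T (interior_subset (hTi (Or.inr hz))))
  refine ⟨f, fun n => (hfQ n).1, fun n => (hfQ n).2, fun n => (hfR n).1, ?_, ?_⟩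
  · apply Set.eq_univ_of_forall
    intro x
    have : x ∈ ⋃ n, K' n := hK'u ▸ Set.mem_univ x
    obtain ⟨n, hn⟩ := Set.mem_iUnion.mp this
    exact Set.mem_iUnion.mpr ⟨n + 1, (hfR n).2 hn⟩
  · rw [hf0]; exact hsub S

/-- Gluing the stagewise separations along the exhaustion. -/
lemma auxKP.glue (hG : IsClosed {p : E × E | p.1 ≤ p.2}) {A B O : Set E} (K : ℕ → Set E)
    (hKc : ∀ n, IsCompact (K n))
    (hKconv : ∀ n, decHull (K n) ∩ incHull (K n) ⊆ K n)
    (hKint : ∀ n, K n ⊆ interior (K (n + 1)))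
    (hKuniv : (⋃ n, K n) = Set.univ)
    (hAc : IsClosed A) (hAd : ∀ z a : E, a ∈ A → z ≤ a → z ∈ A)
    (hBc : IsClosed B) (hBi : ∀ z b : E, b ∈ B → b ≤ z → z ∈ B)
    (hO : IsOpen O) (hI : decHull A ∩ incHull B ⊆ O)
    (hsp : O = ∅ ∨ (A ⊆ decHull (K 0) ∧ B ⊆ incHull (K 0))) :
    ∃ U V : Set E, IsOpen U ∧ decHull U = U ∧ IsOpen V ∧ incHull V = V ∧
      A ⊆ U ∧ B ⊆ V ∧ U ∩ V ⊆ O := by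
  classical
  have hKmono : Monotone K :=
    monotone_nat_of_le_succ (fun n => (hKint n).trans interior_subset)
  have hsp' : ∀ n, O = ∅ ∨ (A ⊆ decHull (K n) ∧ B ⊆ incHull (K n)) := by
    intro n
    rcases hsp with h | ⟨h1, h2⟩
    · exact Or.inl h
    · refine Or.inr ⟨fun z hz => ?_, fun z hz => ?_⟩
      · obtain ⟨c, hc, hzc⟩ := h1 hz
        exact ⟨c, hKmono (Nat.zero_le n) hc, hzc⟩
      · obtain ⟨c, hc, hcz⟩ := h2 hz
        exact ⟨c, hKmono (Nat.zero_le n) hc, hcz⟩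
  -- the per-stage invariant
  set Q : ℕ → Set E × Set E × Set E × Set E → Prop := fun n s =>
      IsOpen s.1 ∧ IsOpen s.2.1 ∧ IsCompact s.2.2.1 ∧ IsCompact s.2.2.2 ∧
      s.2.2.1 ⊆ K n ∧ s.2.2.2 ⊆ K n ∧
      A ∩ K n ⊆ s.1 ∩ K n ∧ B ∩ K n ⊆ s.2.1 ∩ K n ∧
      s.1 ∩ K n ⊆ s.2.2.1 ∧ s.2.1 ∩ K n ⊆ s.2.2.2 ∧
      (∀ z ∈ K n, ∀ u ∈ s.1 ∩ K n, z ≤ u → z ∈ s.1 ∩ K n) ∧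
      (∀ z ∈ K n, ∀ v ∈ s.2.1 ∩ K n, v ≤ z → z ∈ s.2.1 ∩ K n) ∧
      s.2.2.1 ∩ s.2.2.2 ⊆ O ∧
      decHull (A ∪ s.2.2.1) ∩ incHull (B ∪ s.2.2.2) ⊆ O with hQdef
  obtain ⟨WU0, WV0, C0, D0, hWUo, hWVo, hC'c, hD'c, hC'K, hD'K, hAsub, hBsub, hUC, hVD,
    hdS, hiT, hdC, hiD, hCD, hI'⟩ := auxKP.step hG (hKc 0) (hKconv 0) hAc hAd hBc hBi
      isCompact_empty (Set.empty_subset _) isCompact_empty (Set.empty_subset _) hO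
      (by simpa using hI) (hsp' 0)
  have h0 : Q 0 (WU0, WV0, C0, D0) := by
    refine ⟨hWUo, hWVo, hC'c, hD'c, hC'K, hD'K, ?_, ?_, hUC, hVD, hdS, hiT, hCD, hI'⟩
    · exact fun a ha => hAsub (Or.inl ha)
    · exact fun b hb => hBsub (Or.inl hb)
  obtain ⟨f, -, hfQ, hfR⟩ := auxKP.depRec Q
    (fun n s s' => s.2.2.1 ⊆ s'.1 ∩ K (n + 1) ∧ s.2.2.2 ⊆ s'.2.1 ∩ K (n + 1))
    (WU0, WV0, C0, D0) h0
    (by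
      rintro n ⟨WU, WV, C, D⟩ hQn
      obtain ⟨h1, h2, h3, h4, h5, h6, h7, h8, h9, h10, h11, h12, h13, h14⟩ := hQn
      obtain ⟨WU', WV', C', D', hWUo', hWVo', hC'c', hD'c', hC'K', hD'K', hAsub', hBsub',
        hUC', hVD', hdS', hiT', hdC', hiD', hCD', hI''⟩ :=
        auxKP.step hG (hKc (n + 1)) (hKconv (n + 1)) hAc hAd hBc hBi
          h3 (h5.trans (hKmono (Nat.le_succ n))) h4 (h6.trans (hKmono (Nat.le_succ n)))
          hO h14 (hsp' (n + 1))
      refine ⟨(WU', WV', C', D'),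
        ⟨hWUo', hWVo', hC'c', hD'c', hC'K', hD'K',
          fun a ha => hAsub' (Or.inl ha), fun b hb => hBsub' (Or.inl hb),
          hUC', hVD', hdS', hiT', hCD', hI''⟩,
        fun c hc => hAsub' (Or.inr hc), fun d hd => hBsub' (Or.inr hd)⟩)
  -- assemble
  set U : Set E := ⋃ n, (f n).1 ∩ K n with hUdef
  set V : Set E := ⋃ n, (f n).2.1 ∩ K n with hVdef
  have hUchain : ∀ n, (f n).1 ∩ K n ⊆ (f (n + 1)).1 ∩ K (n + 1) :=
    fun n => ((hfQ n).2.2.2.2.2.2.2.2.1).trans (hfR n).1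
  have hVchain : ∀ n, (f n).2.1 ∩ K n ⊆ (f (n + 1)).2.1 ∩ K (n + 1) :=
    fun n => ((hfQ n).2.2.2.2.2.2.2.2.2.1).trans (hfR n).2
  have hUmono : Monotone (fun n => (f n).1 ∩ K n) := monotone_nat_of_le_succ hUchain
  have hVmono : Monotone (fun n => (f n).2.1 ∩ K n) := monotone_nat_of_le_succ hVchain
  have hmem : ∀ z : E, ∃ n, z ∈ K n := by
    intro z
    have : z ∈ ⋃ n, K n := hKuniv ▸ Set.mem_univ z
    exact Set.mem_iUnion.mp this
  have hUopen : IsOpen U := by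
    have : U = ⋃ n, ((f (n + 1)).1 ∩ interior (K (n + 1))) := by
      apply Set.Subset.antisymm
      · rintro z hz
        obtain ⟨n, hzn⟩ := Set.mem_iUnion.mp hz
        have hz' := hUchain n hzn
        exact Set.mem_iUnion.mpr ⟨n, hz'.1, hKint n hzn.2⟩
      · rintro z hz
        obtain ⟨n, hz1, hz2⟩ := Set.mem_iUnion.mp hz
        exact Set.mem_iUnion.mpr ⟨n + 1, hz1, interior_subset hz2⟩
    rw [this]
    exact isOpen_iUnion fun n => ((hfQ (n + 1)).1).inter isOpen_interior
  have hVopen : IsOpen V := by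
    have : V = ⋃ n, ((f (n + 1)).2.1 ∩ interior (K (n + 1))) := by
      apply Set.Subset.antisymm
      · rintro z hz
        obtain ⟨n, hzn⟩ := Set.mem_iUnion.mp hz
        have hz' := hVchain n hzn
        exact Set.mem_iUnion.mpr ⟨n, hz'.1, hKint n hzn.2⟩
      · rintro z hz
        obtain ⟨n, hz1, hz2⟩ := Set.mem_iUnion.mp hz
        exact Set.mem_iUnion.mpr ⟨n + 1, hz1, interior_subset hz2⟩
    rw [this]
    exact isOpen_iUnion fun n => ((hfQ (n + 1)).2.1).inter isOpen_interior
  refine ⟨U, V, hUopen, ?_, hVopen, ?_, ?_, ?_, ?_⟩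
  · apply Set.Subset.antisymm
    · rintro z ⟨u, hu, hzu⟩
      obtain ⟨n, hun⟩ := Set.mem_iUnion.mp hu
      obtain ⟨m0, hzm⟩ := hmem z
      set m := max n m0 with hm
      have hum : u ∈ (f m).1 ∩ K m := hUmono (le_max_left n m0) hun
      have hzKm : z ∈ K m := hKmono (le_max_right n m0) hzm
      exact Set.mem_iUnion.mpr ⟨m, (hfQ m).2.2.2.2.2.2.2.2.2.2.1 z hzKm u hum hzu⟩
    · exact fun u hu => ⟨u, hu, le_refl u⟩
  · apply Set.Subset.antisymm
    · rintro z ⟨v, hv, hvz⟩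
      obtain ⟨n, hvn⟩ := Set.mem_iUnion.mp hv
      obtain ⟨m0, hzm⟩ := hmem z
      set m := max n m0 with hm
      have hvm : v ∈ (f m).2.1 ∩ K m := hVmono (le_max_left n m0) hvn
      have hzKm : z ∈ K m := hKmono (le_max_right n m0) hzm
      exact Set.mem_iUnion.mpr ⟨m, (hfQ m).2.2.2.2.2.2.2.2.2.2.2.1 z hzKm v hvm hvz⟩
    · exact fun v hv => ⟨v, hv, le_refl v⟩
  · intro a ha
    obtain ⟨n, hn⟩ := hmem a
    exact Set.mem_iUnion.mpr ⟨n, (hfQ n).2.2.2.2.2.2.1 ⟨ha, hn⟩⟩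
  · intro b hb
    obtain ⟨n, hn⟩ := hmem b
    exact Set.mem_iUnion.mpr ⟨n, (hfQ n).2.2.2.2.2.2.2.1 ⟨hb, hn⟩⟩
  · rintro z ⟨hzU, hzV⟩
    obtain ⟨n, hzn⟩ := Set.mem_iUnion.mp hzU
    obtain ⟨m, hzm⟩ := Set.mem_iUnion.mp hzV
    set p := max n m with hp
    have h1 : z ∈ (f p).1 ∩ K p := hUmono (le_max_left n m) hzn
    have h2 : z ∈ (f p).2.1 ∩ K p := hVmono (le_max_right n m) hzm
    exact (hfQ p).2.2.2.2.2.2.2.2.2.2.2.2.1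
      ⟨(hfQ p).2.2.2.2.2.2.2.2.1 h1, (hfQ p).2.2.2.2.2.2.2.2.2.1 h2⟩

end Aux

/-- Every k-preserving closed ordered space whose topology is locally compact
and σ-compact is convex and normally ordered. -/
theorem convex_normallyOrdered_of_kPreserving {E : Type*} [TopologicalSpace E]
    [Preorder E]
    (hG : IsClosed {p : E × E | p.1 ≤ p.2})
    (hanti : ∀ a b : E, a ≤ b → b ≤ a → a = b)
    (hkp : ∀ K : Set E, IsCompact K → IsCompact (decHull K ∩ incHull K))
    (hloc : ∀ x : E, ∃ K : Set E, IsCompact K ∧ K ∈ 𝓝 x)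
    (hsigma : ∃ K : ℕ → Set E, (∀ n, IsCompact (K n)) ∧ (⋃ n, K n) = Set.univ) :
    (∀ x : E, ∀ O : Set E, IsOpen O → x ∈ O →
      ∃ U V : Set E, IsOpen U ∧ decHull U = U ∧ IsOpen V ∧ incHull V = V ∧
        x ∈ U ∩ V ∧ U ∩ V ⊆ O) ∧
    (∀ x : E, IsClosed (incHull {x}) ∧ IsClosed (decHull {x})) ∧
    (∀ A B : Set E, IsClosed A → decHull A = A → IsClosed B → incHull B = B →
      A ∩ B = ∅ →
      ∃ U V : Set E, IsOpen U ∧ decHull U = U ∧ IsOpen V ∧ incHull V = V ∧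
        A ⊆ U ∧ B ⊆ V ∧ U ∩ V = ∅) := by
  refine ⟨?_, ?_, ?_⟩
  · -- convexity
    intro x O hOo hxO
    obtain ⟨K, hKc, hKconv, hKint, hKuniv, hxK⟩ :=
      auxKP.exhaust hkp hloc hsigma (isCompact_singleton : IsCompact ({x} : Set E))
    have hx0 : x ∈ K 0 := hxK rfl
    have hAd : ∀ z a : E, a ∈ decHull ({x} : Set E) → z ≤ a → z ∈ decHull ({x} : Set E) := by
      rintro z a ⟨c, hc, hac⟩ hza
      exact ⟨c, hc, le_trans hza hac⟩
    have hBi : ∀ z b : E, b ∈ incHull ({x} : Set E) → b ≤ z → z ∈ incHull ({x} : Set E) := by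
      rintro z b ⟨c, hc, hcb⟩ hbz
      exact ⟨c, hc, le_trans hcb hbz⟩
    have hI : decHull (decHull ({x} : Set E)) ∩ incHull (incHull ({x} : Set E)) ⊆ O := by
      rintro z ⟨⟨a, ⟨c, hc, hac⟩, hza⟩, ⟨b, ⟨c', hc', hc'b⟩, hbz⟩⟩
      rw [Set.mem_singleton_iff] at hc hc'
      have h1 : z ≤ x := le_trans hza (hc ▸ hac)
      have h2 : x ≤ z := le_trans (hc' ▸ hc'b) hbz
      have := hanti z x h1 h2
      rwa [this]
    obtain ⟨U, V, hUo, hUd, hVo, hVi, hAU, hBV, hUV⟩ :=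
      auxKP.glue hG K hKc hKconv hKint hKuniv
        (auxKP.isClosed_decHull hG isCompact_singleton) hAd
        (auxKP.isClosed_incHull hG isCompact_singleton) hBi hOo hI
        (Or.inr ⟨by rintro z ⟨c, hc, hzc⟩; rw [Set.mem_singleton_iff] at hc
                    exact ⟨x, hx0, hc ▸ hzc⟩,
                 by rintro z ⟨c, hc, hcz⟩; rw [Set.mem_singleton_iff] at hc
                    exact ⟨x, hx0, hc ▸ hcz⟩⟩)
    exact ⟨U, V, hUo, hUd, hVo, hVi,
      ⟨hAU ⟨x, rfl, le_refl x⟩, hBV ⟨x, rfl, le_refl x⟩⟩, hUV⟩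
  · -- closedness of point hulls
    intro x
    exact ⟨auxKP.isClosed_incHull hG isCompact_singleton,
      auxKP.isClosed_decHull hG isCompact_singleton⟩
  · -- normal order separation
    intro A B hAc hAdec hBc hBinc hAB
    obtain ⟨K, hKc, hKconv, hKint, hKuniv, -⟩ :=
      auxKP.exhaust hkp hloc hsigma (isCompact_empty (X := E))
    have hAd : ∀ z a : E, a ∈ A → z ≤ a → z ∈ A := by
      intro z a ha hza
      have : z ∈ decHull A := ⟨a, ha, hza⟩
      rwa [hAdec] at this
    have hBi : ∀ z b : E, b ∈ B → b ≤ z → z ∈ B := by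
      intro z b hb hbz
      have : z ∈ incHull B := ⟨b, hb, hbz⟩
      rwa [hBinc] at this
    have hI : decHull A ∩ incHull B ⊆ (∅ : Set E) := by
      rintro z ⟨⟨a, ha, hza⟩, ⟨b, hb, hbz⟩⟩
      have hzA : z ∈ A := hAd z a ha hza
      have hzB : z ∈ B := hBi z b hb hbz
      exact hAB ▸ (⟨hzA, hzB⟩ : z ∈ A ∩ B)
    obtain ⟨U, V, hUo, hUd, hVo, hVi, hAU, hBV, hUV⟩ :=
      auxKP.glue hG K hKc hKconv hKint hKuniv hAc hAd hBc hBi isOpen_empty hI (Or.inl rfl)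
    exact ⟨U, V, hUo, hUd, hVo, hVi, hAU, hBV, Set.subset_empty_iff.mp hUV⟩
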